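/- For all real a > 0, c > 0, b ∈ [0, 1], and δ ∈ [0, π/6], the following three pairs of closed balls of radius 1/2 in ℝ³ are disjoint: the balls centered at s_a and at t_c; the balls centered at s_a and at q_{b,c}; and the balls centered at p_{a,b} and at t_c. -/

import Mathlib

noncomputable section

/-- The point `s_a = (1 + a·cos δ, a·sin δ, 0)` in `ℝ³`. -/
def sPt (δ a : ℝ) : EuclideanSpace ℝ (Fin 3) :=
  (WithLp.equiv 2 (Fin 3 → ℝ)).symm ![1 + a * Real.cos δ, a * Real.sin δ, 0]

/-- The point `p_{a,b} = (1 + a·cos δ − b·sin δ, a·sin δ + b·cos δ, √(1 − b²))` in `ℝ³`. -/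
def pPt (δ a b : ℝ) : EuclideanSpace ℝ (Fin 3) :=
  (WithLp.equiv 2 (Fin 3 → ℝ)).symm
    ![1 + a * Real.cos δ - b * Real.sin δ, a * Real.sin δ + b * Real.cos δ,
      Real.sqrt (1 - b ^ 2)]

/-- The point `q_{b,c} = (−c, b, √(1 − b²))` in `ℝ³`. -/
def qPt (b c : ℝ) : EuclideanSpace ℝ (Fin 3) :=
  (WithLp.equiv 2 (Fin 3 → ℝ)).symm ![-c, b, Real.sqrt (1 - b ^ 2)]

/-- The point `t_c = (−c, 0, 0)` in `ℝ³`. -/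
def tPt (c : ℝ) : EuclideanSpace ℝ (Fin 3) :=
  (WithLp.equiv 2 (Fin 3 → ℝ)).symm ![-c, 0, 0]

theorem stmt2 (a c b δ : ℝ) (ha : 0 < a) (hc : 0 < c) (hb : b ∈ Set.Icc (0 : ℝ) 1)
    (hδ : δ ∈ Set.Icc (0 : ℝ) (Real.pi / 6)) :
    Disjoint (Metric.closedBall (sPt δ a) (1 / 2)) (Metric.closedBall (tPt c) (1 / 2)) ∧
    Disjoint (Metric.closedBall (sPt δ a) (1 / 2)) (Metric.closedBall (qPt b c) (1 / 2)) ∧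
    Disjoint (Metric.closedBall (pPt δ a b) (1 / 2)) (Metric.closedBall (tPt c) (1 / 2)) := by
  obtain ⟨hb0, hb1⟩ := hb
  obtain ⟨hδ0, hδ1⟩ := hδ
  have hpi : Real.pi / 6 ≤ Real.pi := by linarith [Real.pi_pos]
  have hco : Real.sqrt 3 / 2 ≤ Real.cos δ := by
    rw [← Real.cos_pi_div_six]
    exact Real.cos_le_cos_of_nonneg_of_le_pi hδ0 hpi hδ1
  have hsi : Real.sin δ ≤ 1 / 2 := by
    rw [← Real.sin_pi_div_six]
    exact Real.sin_le_sin_of_le_of_le_pi_div_two (by linarith [Real.pi_pos]) (by linarith [Real.pi_pos]) hδ1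
  have hsi0 : 0 ≤ Real.sin δ := Real.sin_nonneg_of_nonneg_of_le_pi hδ0 (by linarith)
  have h3 : (Real.sqrt 3) ^ 2 = 3 := Real.sq_sqrt (by norm_num)
  have h30 : (0:ℝ) ≤ Real.sqrt 3 := Real.sqrt_nonneg 3
  have hsq : Real.sqrt (1 - b ^ 2) ^ 2 = 1 - b ^ 2 := Real.sq_sqrt (by nlinarith)
  have key : ∀ x y : EuclideanSpace ℝ (Fin 3),
      1 < ∑ i, dist (x i) (y i) ^ 2 →
      Disjoint (Metric.closedBall x (1 / 2)) (Metric.closedBall y (1 / 2)) := by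
    intro x y h
    apply Metric.closedBall_disjoint_closedBall
    rw [EuclideanSpace.dist_eq]
    have : (1:ℝ) < Real.sqrt (∑ i, dist (x i) (y i) ^ 2) := by
      rw [show (1:ℝ) = Real.sqrt 1 by simp]
      exact Real.sqrt_lt_sqrt (by norm_num) h
    linarith
  have hco0 : 0 < Real.cos δ := by nlinarith
  refine ⟨key _ _ ?_, key _ _ ?_, key _ _ ?_⟩
  · simp only [sPt, tPt, WithLp.equiv_symm_apply, PiLp.toLp_apply, Fin.sum_univ_three,
      Matrix.cons_val_zero, Matrix.cons_val_one, Matrix.head_cons, Matrix.cons_val_two,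
      Matrix.tail_cons, Real.dist_eq]
    rw [sq_abs, sq_abs, sq_abs]
    nlinarith [sq_nonneg (a * Real.sin δ), mul_pos ha hco0]
  · simp only [sPt, qPt, WithLp.equiv_symm_apply, PiLp.toLp_apply, Fin.sum_univ_three,
      Matrix.cons_val_zero, Matrix.cons_val_one, Matrix.head_cons, Matrix.cons_val_two,
      Matrix.tail_cons, Real.dist_eq]
    rw [sq_abs, sq_abs, sq_abs]
    have h1 : 1 < 1 + a * Real.cos δ - -c := by nlinarith [mul_pos ha hco0]
    nlinarith [sq_nonneg (a * Real.sin δ - b), Real.sqrt_nonneg (1 - b ^ 2)]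
  · simp only [pPt, tPt, WithLp.equiv_symm_apply, PiLp.toLp_apply, Fin.sum_univ_three,
      Matrix.cons_val_zero, Matrix.cons_val_one, Matrix.head_cons, Matrix.cons_val_two,
      Matrix.tail_cons, Real.dist_eq]
    rw [sq_abs, sq_abs, sq_abs]
    have hu : 1 / 2 + c ≤ 1 + a * Real.cos δ - b * Real.sin δ - -c := by
      nlinarith [mul_pos ha hco0, mul_le_mul hb1 hsi hsi0 zero_le_one]
    have h2 : Real.sqrt 3 / 2 * b ≤ a * Real.sin δ + b * Real.cos δ := by
      nlinarith [mul_nonneg ha.le hsi0]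
    nlinarith [sq_nonneg (a * Real.sin δ + b * Real.cos δ), mul_nonneg h30 hb0]
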